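/- Let a and b be relatively prime integers with 1 ≤ a < b. Then there exists an integer n and a permutation π of {1,...,n} such that the set of values of the discrete derivative of π is exactly {a, −b}. In particular, for a ≥ 2 one can take n = a + b and π_i ≡ 1 + (i−1)a (mod a+b) with π_i ∈ {1,...,n}, and for a = 1 one can take n = b+1 and π = (2,3,...,b+1,1). -/

import Mathlib

private lemma key_exists (a n : ℕ) (hn : 1 < n) (hco : Nat.Coprime a n) (r : ℕ) (hr : r < n) :
    ∃ i, 1 ≤ i ∧ i ≤ n ∧ i * a % n = r := by
  obtain ⟨a', -, ha'⟩ := Nat.exists_mul_mod_eq_one_of_coprime hco hn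
  set i0 := r * a' % n with hi0
  have hmod : i0 * a % n = r := by
    have h1 : i0 * a ≡ r * a' * a [MOD n] := (Nat.mod_modEq (r * a') n).mul_right a
    have h2 : a * a' ≡ 1 [MOD n] := by
      unfold Nat.ModEq
      rw [ha', Nat.mod_eq_of_lt hn]
    have h3 : r * a' * a ≡ r * 1 [MOD n] := by
      have : r * a' * a = r * (a * a') := by ring
      rw [this]
      exact h2.mul_left r
    have h4 : i0 * a ≡ r [MOD n] := h1.trans (by simpa using h3)
    calc i0 * a % n = r % n := h4
      _ = r := Nat.mod_eq_of_lt hr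
  by_cases h0 : i0 = 0
  · refine ⟨n, by omega, le_refl n, ?_⟩
    rw [Nat.mul_mod_right]
    rw [h0] at hmod
    simp at hmod
    omega
  · exact ⟨i0, by omega, le_of_lt (by exact Nat.mod_lt _ (by omega)), hmod⟩

/-- For relatively prime integers 1 ≤ a < b there exist n and a permutation of {1,...,n}
whose set of discrete derivative values is exactly {a, -b}. -/
theorem D_pair_realization (a b : ℕ) (ha : 1 ≤ a) (hab : a < b) (hco : Nat.Coprime a b) :
    ∃ (n : ℕ) (π : ℕ → ℤ), Set.BijOn π (Set.Icc 1 n) (Set.Icc 1 (n : ℤ)) ∧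
      {d : ℤ | ∃ i : ℕ, 1 ≤ i ∧ i < n ∧ d = π (i + 1) - π i} = {(a : ℤ), -(b : ℤ)} := by
  set n := a + b with hndef
  have hn1 : 1 < n := by omega
  have han : a < n := by omega
  have hbn : b < n := by omega
  have hnz : (n : ℤ) = (a : ℤ) + (b : ℤ) := by push_cast [hndef]; ring
  have hcon : Nat.Coprime a n := by
    show Nat.Coprime a (a + b)
    rw [add_comm, Nat.coprime_add_self_right]
    exact hco
  set π : ℕ → ℤ := fun i => ((i * a % n : ℕ) : ℤ) + 1 with hπ
  refine ⟨n, π, ⟨?_, ?_, ?_⟩, ?_⟩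
  · -- MapsTo
    intro i hi
    simp only [Set.mem_Icc, hπ]
    have h1 : i * a % n < n := Nat.mod_lt _ (by omega)
    omega
  · -- InjOn
    intro i hi j hj hij
    simp only [Set.mem_Icc] at hi hj
    have h1 : i * a % n = j * a % n := by
      simp only [hπ] at hij
      exact_mod_cast (add_right_cancel hij)
    have h2 : i * a ≡ j * a [MOD n] := h1
    have h3 : i ≡ j [MOD n] := Nat.ModEq.cancel_right_of_coprime hcon.symm h2
    have h4 : (n : ℤ) ∣ (j : ℤ) - i := h3.dvd
    have h5 : (j : ℤ) - i = 0 := by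
      apply Int.eq_zero_of_abs_lt_dvd h4
      rw [abs_lt]
      omega
    omega
  · -- SurjOn
    intro m hm
    simp only [Set.mem_Icc] at hm
    set r := (m - 1).toNat with hr
    have hrn : r < n := by omega
    obtain ⟨i, hi1, hin, hia⟩ := key_exists a n hn1 hcon r hrn
    refine ⟨i, by simp [Set.mem_Icc]; omega, ?_⟩
    simp only [hπ, hia]
    omega
  · -- derivative set
    ext d
    simp only [Set.mem_setOf_eq, Set.mem_insert_iff, Set.mem_singleton_iff]
    constructor
    · rintro ⟨i, hi1, hin, rfl⟩
      set r := i * a % n with hrdef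
      have hr : r < n := Nat.mod_lt _ (by omega)
      have hstep : (i + 1) * a % n = (r + a) % n := by
        have h1 : (i + 1) * a = i * a + a := by ring
        rw [h1, Nat.add_mod, ← hrdef, Nat.mod_eq_of_lt han]
      by_cases hc : r + a < n
      · left
        rw [Nat.mod_eq_of_lt hc] at hstep
        simp only [hπ, hstep, ← hrdef]
        push_cast
        ring
      · right
        have h2 : (r + a) % n = r + a - n := by
          rw [Nat.mod_eq_sub_mod (by omega), Nat.mod_eq_of_lt (by omega)]
        rw [h2] at hstep
        simp only [hπ, hstep, ← hrdef]
        have hle : n ≤ r + a := by omega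
        rw [Nat.cast_sub hle]
        push_cast
        omega
    · rintro (rfl | rfl)
      · refine ⟨1, le_refl 1, by omega, ?_⟩
        have h1 : 1 * a % n = a := by rw [one_mul, Nat.mod_eq_of_lt han]
        have h2 : (1 + 1) * a % n = 2 * a := by
          norm_num
          exact Nat.mod_eq_of_lt (by omega)
        simp only [hπ, h1, h2]
        push_cast
        ring
      · obtain ⟨i, hi1, hin, hia⟩ := key_exists a n hn1 hcon b hbn
        have hine : i ≠ n := by
          intro h
          rw [h, Nat.mul_mod_right] at hia
          omega
        refine ⟨i, hi1, by omega, ?_⟩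
        have hstep : (i + 1) * a % n = 0 := by
          have h1 : (i + 1) * a = i * a + a := by ring
          rw [h1, Nat.add_mod, hia, Nat.mod_eq_of_lt han]
          have hba : b + a = n := by omega
          rw [hba, Nat.mod_self]
        simp only [hπ, hstep, hia]
        push_cast
        omega
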